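/- Let n ≥ 1 and N ≥ 0 be integers and let f : ℝⁿ → ℝ be measurable with ⟨x⟩^{2N} f ∈ L¹(ℝⁿ). Assume ∫_{ℝⁿ} x^β f(x) dx = 0 for every multi-index β with |β| ≤ N−1. Then the double integral Q(f) := ∫_{ℝⁿ}∫_{ℝⁿ} |x−y|^{2N} f(x) f(y) dx dy is absolutely convergent and (−1)^N Q(f) ≥ 0; moreover, if Q(f) = 0 then ∫_{ℝⁿ} x^α f(x) dx = 0 for every multi-index α with |α| = N. -/

import Mathlib

open MeasureTheory Finset

namespace QFSD

lemma pow_sum_expand {n : ℕ} (b : ℕ) (g : Fin n → ℝ) :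
    (∑ i, g i)^b = ∑ m : Fin b → Fin n, ∏ j, g (m j) :=
  calc (∑ i, g i)^b = ∏ _j : Fin b, ∑ i, g i := by simp [Finset.prod_const]
  _ = ∑ p ∈ Fintype.piFinset (fun _ : Fin b => univ), ∏ j, g (p j) := Finset.prod_univ_sum _ _
  _ = ∑ m : Fin b → Fin n, ∏ j, g (m j) := by rw [Fintype.piFinset_univ]

lemma norm_sq_expand {n : ℕ} (x : EuclideanSpace ℝ (Fin n)) : ‖x‖^2 = ∑ i, x i ^2 := by
  rw [EuclideanSpace.norm_eq, Real.sq_sqrt (by positivity)]; simp [sq_abs]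

lemma inner_expand {n : ℕ} (x y : EuclideanSpace ℝ (Fin n)) :
    (inner ℝ x y : ℝ) = ∑ i, x i * y i := by
  simp [PiLp.inner_apply, RCLike.inner_apply, mul_comm]

lemma prod_fiber {n b : ℕ} (m : Fin b → Fin n) (h : Fin n → ℝ) :
    ∏ j, h (m j) = ∏ i, h i ^ (Finset.univ.filter fun j => m j = i).card := by
  rw [← Finset.prod_fiberwise_of_maps_to (fun j _ => Finset.mem_univ (m j)) (fun j => h (m j))]
  refine Finset.prod_congr rfl fun i _ => ?_
  rw [Finset.prod_congr rfl (fun j hj => by rw [(Finset.mem_filter.1 hj).2] :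
      ∀ j ∈ Finset.univ.filter fun j => m j = i, h (m j) = h i), Finset.prod_const]

lemma sum_fiber {n b : ℕ} (m : Fin b → Fin n) :
    ∑ i, (Finset.univ.filter fun j => m j = i).card = b := by
  rw [← Finset.card_eq_sum_card_fiberwise (fun j _ => Finset.mem_univ (m j))]; simp

/-- The kernel expansion: trinomial expansion of `‖x-y‖^(2N)`. -/
lemma kernel_expand {n : ℕ} (N : ℕ) (x y : EuclideanSpace ℝ (Fin n)) :
    ‖x - y‖^(2*N) = ∑ k ∈ range (N+1), ∑ a ∈ range (k+1), ∑ m : Fin (N-k) → Fin n,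
      ((N.choose k : ℝ) * (k.choose a : ℝ) * (-2:ℝ)^(N-k))
        * (‖x‖^(2*a) * ∏ j, x (m j)) * (‖y‖^(2*(k-a)) * ∏ j, y (m j)) := by
  have h0 : ‖x - y‖^(2*N) = ((‖x‖^2 + ‖y‖^2) + (-2) * (inner ℝ x y : ℝ))^N := by
    rw [pow_mul, norm_sub_sq_real]; congr 1; ring
  have hs : ∀ k : ℕ, (‖x‖^2+‖y‖^2)^k
      = ∑ a ∈ range (k+1), ‖x‖^(2*a) * ‖y‖^(2*(k-a)) * (k.choose a : ℝ) := by
    intro k; rw [add_pow]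
    exact Finset.sum_congr rfl fun a _ => by rw [← pow_mul, ← pow_mul]
  have ht : ∀ j : ℕ, ((-2) * (inner ℝ x y : ℝ))^j
      = (-2:ℝ)^j * ∑ m : Fin j → Fin n, (∏ i, x (m i)) * (∏ i, y (m i)) := by
    intro j
    rw [mul_pow, inner_expand, pow_sum_expand]
    congr 1
    exact Finset.sum_congr rfl fun m _ => Finset.prod_mul_distrib
  rw [h0, add_pow]
  have hcongr : ∀ k ∈ range (N+1),
      (‖x‖^2+‖y‖^2)^k * ((-2) * (inner ℝ x y : ℝ))^(N-k) * (N.choose k : ℝ)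
      = (∑ a ∈ range (k+1), ‖x‖^(2*a) * ‖y‖^(2*(k-a)) * (k.choose a : ℝ))
        * ((-2:ℝ)^(N-k) * ∑ m : Fin (N-k) → Fin n, (∏ i, x (m i)) * (∏ i, y (m i)))
        * (N.choose k : ℝ) := fun k _ => by rw [hs, ht]
  rw [Finset.sum_congr rfl hcongr]
  refine Finset.sum_congr rfl fun k _ => ?_
  simp only [Finset.sum_mul, Finset.mul_sum]
  rw [Finset.sum_comm]
  apply Finset.sum_congr rfl
  intro a _
  apply Finset.sum_congr rfl
  intro m _
  ring

section Bounds

variable {n : ℕ}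

lemma one_le_jb (x : EuclideanSpace ℝ (Fin n)) : 1 ≤ Real.sqrt (1 + ‖x‖^2) := by
  have : Real.sqrt 1 ≤ Real.sqrt (1 + ‖x‖^2) :=
    Real.sqrt_le_sqrt (by nlinarith [sq_nonneg ‖x‖])
  simpa using this

lemma norm_le_jb (x : EuclideanSpace ℝ (Fin n)) : ‖x‖ ≤ Real.sqrt (1 + ‖x‖^2) := by
  have h1 : Real.sqrt (‖x‖^2) ≤ Real.sqrt (1 + ‖x‖^2) := Real.sqrt_le_sqrt (by nlinarith)
  calc ‖x‖ = Real.sqrt (‖x‖^2) := (Real.sqrt_sq (norm_nonneg x)).symm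
    _ ≤ Real.sqrt (1 + ‖x‖^2) := h1

lemma coord_le_jb (x : EuclideanSpace ℝ (Fin n)) (i : Fin n) :
    |x i| ≤ Real.sqrt (1 + ‖x‖^2) := by
  refine le_trans ?_ (norm_le_jb x)
  have h1 := EuclideanSpace.norm_eq x
  have h2 : |x i| = Real.sqrt (‖x i‖^2) := by rw [Real.sqrt_sq_eq_abs]; simp
  rw [h1, h2]
  exact Real.sqrt_le_sqrt (Finset.single_le_sum (f := fun j => ‖x j‖ ^2)
    (fun j _ => sq_nonneg _) (Finset.mem_univ i))

lemma mono_bound (N : ℕ) (β : Fin n → ℕ) (hβ : ∑ i, β i ≤ 2*N)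
    (x : EuclideanSpace ℝ (Fin n)) :
    |∏ i, x i ^ β i| ≤ Real.sqrt (1 + ‖x‖^2) ^ (2*N) := by
  set c := Real.sqrt (1 + ‖x‖^2) with hc
  have hc1 : 1 ≤ c := one_le_jb x
  calc |∏ i, x i ^ β i| = ∏ i, |x i| ^ β i := by
        rw [Finset.abs_prod]; exact Finset.prod_congr rfl fun i _ => abs_pow _ _
    _ ≤ ∏ i, c ^ β i := by
        refine Finset.prod_le_prod (fun i _ => by positivity)
          (fun i _ => pow_le_pow_left₀ (abs_nonneg _) (coord_le_jb x i) _)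
    _ = c ^ (∑ i, β i) := by rw [← Finset.prod_pow_eq_pow_sum]
    _ ≤ c ^ (2*N) := pow_le_pow_right₀ hc1 hβ

lemma P_bound (N a b : ℕ) (m : Fin b → Fin n) (h : 2*a + b ≤ 2*N)
    (x : EuclideanSpace ℝ (Fin n)) :
    |‖x‖^(2*a) * ∏ j, x (m j)| ≤ Real.sqrt (1 + ‖x‖^2) ^ (2*N) := by
  set c := Real.sqrt (1 + ‖x‖^2) with hc
  have hc1 : 1 ≤ c := one_le_jb x
  have hc0 : 0 ≤ c := le_trans zero_le_one hc1
  calc |‖x‖^(2*a) * ∏ j, x (m j)| = ‖x‖^(2*a) * |∏ j, x (m j)| := by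
        rw [abs_mul, abs_of_nonneg (by positivity)]
    _ ≤ c^(2*a) * c^b := by
        refine mul_le_mul (pow_le_pow_left₀ (norm_nonneg _) (norm_le_jb x) _) ?_
          (abs_nonneg _) (by positivity)
        calc |∏ j, x (m j)| = ∏ j, |x (m j)| := Finset.abs_prod _ _
          _ ≤ ∏ _j : Fin b, c := Finset.prod_le_prod (fun j _ => abs_nonneg _)
              (fun j _ => coord_le_jb x (m j))
          _ = c ^ b := by simp [Finset.prod_const]
    _ = c ^ (2*a + b) := by rw [← pow_add]
    _ ≤ c ^ (2*N) := pow_le_pow_right₀ hc1 h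

lemma P_measurable (a b : ℕ) (m : Fin b → Fin n) :
    Measurable (fun x : EuclideanSpace ℝ (Fin n) => ‖x‖^(2*a) * ∏ j, x (m j)) :=
  (measurable_norm.pow_const _).mul
    (Finset.measurable_prod _ fun j _ => (EuclideanSpace.proj (m j)).continuous.measurable)

lemma mono_measurable (β : Fin n → ℕ) :
    Measurable (fun x : EuclideanSpace ℝ (Fin n) => ∏ i, x i ^ β i) :=
  Finset.measurable_prod _ fun i _ =>
    ((EuclideanSpace.proj i).continuous.measurable).pow_const _

end Bounds

section Main

variable {n N : ℕ} {f : EuclideanSpace ℝ (Fin n) → ℝ}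

lemma integrable_mul (hfm : Measurable f)
    (hf : Integrable (fun x : EuclideanSpace ℝ (Fin n) =>
      Real.sqrt (1 + ‖x‖^2) ^ (2 * N) * f x))
    (g : EuclideanSpace ℝ (Fin n) → ℝ) (hgm : Measurable g)
    (hb : ∀ x, |g x| ≤ Real.sqrt (1 + ‖x‖^2) ^ (2*N)) :
    Integrable (fun x => g x * f x) := by
  have hbnd : Integrable (fun x : EuclideanSpace ℝ (Fin n) =>
      Real.sqrt (1 + ‖x‖^2) ^ (2*N) * |f x|) := by
    refine hf.abs.congr (Filter.Eventually.of_forall fun x => ?_)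
    show |Real.sqrt (1 + ‖x‖^2) ^ (2*N) * f x| = Real.sqrt (1 + ‖x‖^2) ^ (2*N) * |f x|
    rw [abs_mul, abs_of_nonneg (by positivity)]
  refine hbnd.mono' ((hgm.mul hfm).aestronglyMeasurable)
    (Filter.Eventually.of_forall fun x => ?_)
  rw [Real.norm_eq_abs, abs_mul]
  exact mul_le_mul_of_nonneg_right (hb x) (abs_nonneg _)

/-- Vanishing of low-order generalized moments. -/
lemma A_vanish (hfm : Measurable f)
    (hf : Integrable (fun x : EuclideanSpace ℝ (Fin n) =>
      Real.sqrt (1 + ‖x‖^2) ^ (2 * N) * f x))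
    (hmom : ∀ β : Fin n → ℕ, (∑ i, β i) + 1 ≤ N →
      ∫ x : EuclideanSpace ℝ (Fin n), (∏ i, x i ^ β i) * f x = 0)
    (a b : ℕ) (m : Fin b → Fin n) (h : 2*a + b + 1 ≤ N) :
    ∫ x : EuclideanSpace ℝ (Fin n), (‖x‖^(2*a) * ∏ j, x (m j)) * f x = 0 := by
  set β : (Fin a → Fin n) → Fin n → ℕ := fun m' i =>
    2 * (Finset.univ.filter fun j => m' j = i).card
      + (Finset.univ.filter fun j => m j = i).card with hβ
  have hβsum : ∀ m' : Fin a → Fin n, ∑ i, β m' i = 2*a + b := by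
    intro m'
    simp only [hβ]
    rw [Finset.sum_add_distrib, ← Finset.mul_sum, sum_fiber, sum_fiber]
  have hP : ∀ x : EuclideanSpace ℝ (Fin n), ‖x‖^(2*a) * ∏ j, x (m j)
      = ∑ m' : Fin a → Fin n, ∏ i, x i ^ (β m' i) := by
    intro x
    rw [pow_mul, norm_sq_expand, pow_sum_expand, Finset.sum_mul]
    refine Finset.sum_congr rfl fun m' _ => ?_
    rw [prod_fiber m' (fun i => x i ^ 2), prod_fiber m (fun i => x i),
      ← Finset.prod_mul_distrib]
    refine Finset.prod_congr rfl fun i _ => ?_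
    rw [← pow_mul, ← pow_add]
  calc ∫ x : EuclideanSpace ℝ (Fin n), (‖x‖^(2*a) * ∏ j, x (m j)) * f x
      = ∫ x : EuclideanSpace ℝ (Fin n), ∑ m' : Fin a → Fin n, (∏ i, x i ^ (β m' i)) * f x := by
        refine integral_congr_ae (Filter.Eventually.of_forall fun x => ?_)
        show (‖x‖^(2*a) * ∏ j, x (m j)) * f x = ∑ m' : Fin a → Fin n, (∏ i, x i ^ (β m' i)) * f x
        rw [hP, Finset.sum_mul]
    _ = ∑ m' : Fin a → Fin n, ∫ x : EuclideanSpace ℝ (Fin n), (∏ i, x i ^ (β m' i)) * f x := by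
        refine integral_finset_sum _ fun m' _ => ?_
        exact integrable_mul hfm hf _ (mono_measurable _)
          (mono_bound N _ (by rw [hβsum]; omega))
    _ = 0 := Finset.sum_eq_zero fun m' _ => hmom _ (by rw [hβsum]; omega)

/-- Existence of a map realizing prescribed fiber cardinalities. -/
lemma exists_fiber {n N : ℕ} (α : Fin n → ℕ) (h : ∑ i, α i = N) :
    ∃ m : Fin N → Fin n, ∀ i, (Finset.univ.filter fun j => m j = i).card = α i := by
  have hc : Fintype.card ((i : Fin n) × Fin (α i)) = N := by
    simp [Fintype.card_sigma, h]
  let e := Fintype.equivFinOfCardEq hc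
  refine ⟨fun j => (e.symm j).1, fun i => ?_⟩
  rw [← Fintype.card_subtype]
  have e2 : {j : Fin N // (e.symm j).1 = i} ≃ {s : (i : Fin n) × Fin (α i) // s.1 = i} :=
    (Equiv.subtypeEquiv e.symm fun j => Iff.rfl)
  have e3 : {s : (i : Fin n) × Fin (α i) // s.1 = i} ≃ Fin (α i) :=
    { toFun := fun s => s.2 ▸ s.1.2
      invFun := fun b => ⟨⟨i, b⟩, rfl⟩
      left_inv := by rintro ⟨⟨i', b⟩, rfl⟩; rfl
      right_inv := fun b => rfl }
  rw [Fintype.card_congr (e2.trans e3)]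
  exact Fintype.card_fin _

end Main

end QFSD

open QFSD

/-- Sign-definiteness of the quadratic form with kernel `|x-y|^{2N}` on real
    functions with vanishing moments of order `< N` (key ingredient of
    Proposition 5.4, even-dimensional case): `(-1)^N Q(f) ≥ 0`, and if
    `Q(f) = 0` then all moments of order `N` vanish. -/
theorem quadratic_form_sign_definite
    (n N : ℕ) (hn : 1 ≤ n)
    (f : EuclideanSpace ℝ (Fin n) → ℝ) (hfm : Measurable f)
    (hf : Integrable (fun x : EuclideanSpace ℝ (Fin n) =>
      Real.sqrt (1 + ‖x‖^2) ^ (2 * N) * f x))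
    (hmom : ∀ β : Fin n → ℕ, (∑ i, β i) + 1 ≤ N →
      ∫ x : EuclideanSpace ℝ (Fin n), (∏ i, x i ^ β i) * f x = 0) :
    Integrable (fun p : EuclideanSpace ℝ (Fin n) × EuclideanSpace ℝ (Fin n) =>
      ‖p.1 - p.2‖ ^ (2 * N) * f p.1 * f p.2) ∧
    0 ≤ (-1 : ℝ) ^ N *
      ∫ p : EuclideanSpace ℝ (Fin n) × EuclideanSpace ℝ (Fin n),
        ‖p.1 - p.2‖ ^ (2 * N) * f p.1 * f p.2 ∧
    ((∫ p : EuclideanSpace ℝ (Fin n) × EuclideanSpace ℝ (Fin n),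
        ‖p.1 - p.2‖ ^ (2 * N) * f p.1 * f p.2) = 0 →
      ∀ α : Fin n → ℕ, (∑ i, α i) = N →
        ∫ x : EuclideanSpace ℝ (Fin n), (∏ i, x i ^ α i) * f x = 0) := by
  classical
  -- the building blocks
  set P : ℕ → (b : ℕ) → (Fin b → Fin n) → EuclideanSpace ℝ (Fin n) → ℝ :=
    fun a b m x => ‖x‖^(2*a) * ∏ j, x (m j) with hP
  set A : ℕ → (b : ℕ) → (Fin b → Fin n) → ℝ :=
    fun a b m => ∫ x : EuclideanSpace ℝ (Fin n), P a b m x * f x with hA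
  set c : ℕ → ℕ → ℝ :=
    fun k a => (N.choose k : ℝ) * (k.choose a : ℝ) * (-2:ℝ)^(N-k) with hc
  -- integrability of each P factor against f
  have hPint : ∀ (a : ℕ) (b : ℕ) (m : Fin b → Fin n), 2*a + b ≤ 2*N →
      Integrable (fun x : EuclideanSpace ℝ (Fin n) => P a b m x * f x) := by
    intro a b m hab
    simp only [hP]
    exact integrable_mul hfm hf _ (P_measurable a b m) (P_bound N a b m hab)
  -- the pointwise expansion of the integrand
  have hpt : ∀ p : EuclideanSpace ℝ (Fin n) × EuclideanSpace ℝ (Fin n), ‖p.1 - p.2‖ ^ (2 * N) * f p.1 * f p.2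
      = ∑ k ∈ range (N+1), ∑ a ∈ range (k+1), ∑ m : Fin (N-k) → Fin n,
          c k a * ((P a (N-k) m p.1 * f p.1) * (P (k-a) (N-k) m p.2 * f p.2)) := by
    intro p
    rw [kernel_expand N p.1 p.2]
    simp only [Finset.sum_mul]
    refine Finset.sum_congr rfl fun k _ => Finset.sum_congr rfl fun a _ =>
      Finset.sum_congr rfl fun m _ => ?_
    simp only [hP, hc]
    ring
  have hfun : (fun p : EuclideanSpace ℝ (Fin n) × EuclideanSpace ℝ (Fin n) => ‖p.1 - p.2‖ ^ (2 * N) * f p.1 * f p.2)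
      = fun p : EuclideanSpace ℝ (Fin n) × EuclideanSpace ℝ (Fin n) => ∑ k ∈ range (N+1), ∑ a ∈ range (k+1),
          ∑ m : Fin (N-k) → Fin n,
          c k a * ((P a (N-k) m p.1 * f p.1) * (P (k-a) (N-k) m p.2 * f p.2)) :=
    funext hpt
  -- degree bounds for terms appearing in the expansion
  have hdeg1 : ∀ k a : ℕ, k ∈ range (N+1) → a ∈ range (k+1) → 2*a + (N-k) ≤ 2*N := by
    intro k a hk ha
    have := Finset.mem_range.1 hk
    have := Finset.mem_range.1 ha
    omega
  have hdeg2 : ∀ k a : ℕ, k ∈ range (N+1) → a ∈ range (k+1) → 2*(k-a) + (N-k) ≤ 2*N := by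
    intro k a hk ha
    have := Finset.mem_range.1 hk
    have := Finset.mem_range.1 ha
    omega
  -- integrability of each term on the product space
  have hterm_int : ∀ (k a : ℕ), k ∈ range (N+1) → a ∈ range (k+1) →
      ∀ m : Fin (N-k) → Fin n,
      Integrable (fun p : EuclideanSpace ℝ (Fin n) × EuclideanSpace ℝ (Fin n) =>
        c k a * ((P a (N-k) m p.1 * f p.1) * (P (k-a) (N-k) m p.2 * f p.2))) := by
    intro k a hk ha m
    have h1 := hPint a (N-k) m (hdeg1 k a hk ha)
    have h2 := hPint (k-a) (N-k) m (hdeg2 k a hk ha)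
    have : Integrable (fun p : EuclideanSpace ℝ (Fin n) × EuclideanSpace ℝ (Fin n) =>
        (P a (N-k) m p.1 * f p.1) * (P (k-a) (N-k) m p.2 * f p.2)) := by
      rw [Measure.volume_eq_prod]
      exact h1.mul_prod h2
    exact this.const_mul _
  -- integrability of the full integrand
  have hQint : Integrable (fun p : EuclideanSpace ℝ (Fin n) × EuclideanSpace ℝ (Fin n) => ‖p.1 - p.2‖ ^ (2 * N) * f p.1 * f p.2) := by
    rw [hfun]
    refine integrable_finset_sum _ fun k hk => ?_
    refine integrable_finset_sum _ fun a ha => ?_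
    exact integrable_finset_sum _ fun m _ => hterm_int k a hk ha m
  -- the value of the double integral
  have hQval : (∫ p : EuclideanSpace ℝ (Fin n) × EuclideanSpace ℝ (Fin n), ‖p.1 - p.2‖ ^ (2 * N) * f p.1 * f p.2)
      = ∑ k ∈ range (N+1), ∑ a ∈ range (k+1), ∑ m : Fin (N-k) → Fin n,
          c k a * (A a (N-k) m * A (k-a) (N-k) m) := by
    rw [hfun, integral_finset_sum _ (fun k hk => integrable_finset_sum _ fun a ha =>
      integrable_finset_sum _ fun m _ => hterm_int k a hk ha m)]
    refine Finset.sum_congr rfl fun k hk => ?_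
    rw [integral_finset_sum _ (fun a ha => integrable_finset_sum _ fun m _ =>
      hterm_int k a hk ha m)]
    refine Finset.sum_congr rfl fun a ha => ?_
    rw [integral_finset_sum _ (fun m _ => hterm_int k a hk ha m)]
    refine Finset.sum_congr rfl fun m _ => ?_
    rw [integral_const_mul]
    have hh : ∫ p : EuclideanSpace ℝ (Fin n) × EuclideanSpace ℝ (Fin n),
        (P a (N-k) m p.1 * f p.1) * (P (k-a) (N-k) m p.2 * f p.2)
        = (∫ x : EuclideanSpace ℝ (Fin n), P a (N-k) m x * f x)
          * (∫ y : EuclideanSpace ℝ (Fin n), P (k-a) (N-k) m y * f y) := by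
      rw [Measure.volume_eq_prod]
      exact integral_prod_mul (μ := (volume : Measure (EuclideanSpace ℝ (Fin n))))
        (ν := (volume : Measure (EuclideanSpace ℝ (Fin n))))
        (fun x => P a (N-k) m x * f x) (fun y => P (k-a) (N-k) m y * f y)
    rw [hh]
  -- sign of each term
  have hterm_sign : ∀ (k a : ℕ), k ∈ range (N+1) → a ∈ range (k+1) →
      ∀ m : Fin (N-k) → Fin n,
      0 ≤ (-1:ℝ)^N * (c k a * (A a (N-k) m * A (k-a) (N-k) m)) := by
    intro k a hk ha m
    have hkN : k ≤ N := by have := Finset.mem_range.1 hk; omega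
    have hak : a ≤ k := by have := Finset.mem_range.1 ha; omega
    by_cases h1 : 2*a + (N-k) + 1 ≤ N
    · have h0 : A a (N-k) m = 0 := by
        simp only [hA, hP]
        exact A_vanish hfm hf hmom a (N-k) m h1
      rw [h0]; simp
    · by_cases h2 : 2*(k-a) + (N-k) + 1 ≤ N
      · have h0 : A (k-a) (N-k) m = 0 := by
          simp only [hA, hP]
          exact A_vanish hfm hf hmom (k-a) (N-k) m h2
        rw [h0]; simp
      · -- diagonal case : k = 2a
        have hk2a : k = 2*a := by omega
        have hka : k - a = a := by omega
        have h2Nk : N + (N - k) = 2*(N - a) := by omega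
        have hsign : (-1:ℝ)^N * (-2:ℝ)^(N-k) = 2^(N-k) := by
          calc (-1:ℝ)^N * (-2:ℝ)^(N-k)
              = (-1:ℝ)^N * (((-1:ℝ)*2)^(N-k)) := by norm_num
            _ = (-1:ℝ)^(N+(N-k)) * 2^(N-k) := by rw [mul_pow, pow_add]; ring
            _ = 2^(N-k) := by rw [h2Nk, pow_mul, neg_one_sq, one_pow, one_mul]
        rw [hka]
        have : (-1:ℝ)^N * (c k a * (A a (N-k) m * A a (N-k) m))
            = ((N.choose k : ℝ) * (k.choose a : ℝ) * 2^(N-k)) * (A a (N-k) m)^2 := by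
          simp only [hc]
          rw [← hsign]
          ring
        rw [this]
        positivity
  refine ⟨hQint, ?_, ?_⟩
  · -- nonnegativity
    rw [hQval]
    simp only [Finset.mul_sum]
    exact Finset.sum_nonneg fun k hk => Finset.sum_nonneg fun a ha =>
      Finset.sum_nonneg fun m _ => hterm_sign k a hk ha m
  · -- vanishing of order-N moments when Q = 0
    intro hQ0 α hα
    have hsum0 : ∑ k ∈ range (N+1), ∑ a ∈ range (k+1), ∑ m : Fin (N-k) → Fin n,
        (-1:ℝ)^N * (c k a * (A a (N-k) m * A (k-a) (N-k) m)) = 0 := by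
      have hfactor : ∑ k ∈ range (N+1), ∑ a ∈ range (k+1), ∑ m : Fin (N-k) → Fin n,
          (-1:ℝ)^N * (c k a * (A a (N-k) m * A (k-a) (N-k) m))
          = (-1:ℝ)^N * ∑ k ∈ range (N+1), ∑ a ∈ range (k+1), ∑ m : Fin (N-k) → Fin n,
            c k a * (A a (N-k) m * A (k-a) (N-k) m) := by
        simp only [Finset.mul_sum]
      rw [hfactor, ← hQval, hQ0, mul_zero]
    obtain ⟨m, hm⟩ := exists_fiber α hα
    have h0mem : (0:ℕ) ∈ range (N+1) := Finset.mem_range.2 (Nat.succ_pos N)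
    have h0mem1 : (0:ℕ) ∈ range (0+1) := Finset.mem_range.2 Nat.one_pos
    have hlevel1 := (Finset.sum_eq_zero_iff_of_nonneg (fun k hk =>
      Finset.sum_nonneg fun a ha => Finset.sum_nonneg fun m _ =>
        hterm_sign k a hk ha m)).1 hsum0 0 h0mem
    have hlevel2 := (Finset.sum_eq_zero_iff_of_nonneg (fun a ha =>
      Finset.sum_nonneg fun m _ => hterm_sign 0 a h0mem ha m)).1 hlevel1 0 h0mem1
    have hlevel3 := (Finset.sum_eq_zero_iff_of_nonneg (fun m _ =>
      hterm_sign 0 0 h0mem h0mem1 m)).1 hlevel2 m (Finset.mem_univ m)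
    -- hlevel3 : (-1)^N * (c 0 0 * (A 0 (N-0) m * A (0-0) (N-0) m)) = 0
    have hA0 : A 0 (N-0) m = 0 := by
      have hkey : (-1:ℝ)^N * (c 0 0 * (A 0 (N-0) m * A (0-0) (N-0) m))
          = 2^N * (A 0 (N-0) m)^2 := by
        simp only [hc, Nat.choose_zero_right, Nat.choose_self, Nat.cast_one, Nat.sub_zero]
        have h2 : (-1:ℝ)^N * (-2:ℝ)^N = 2^N := by
          rw [← mul_pow]; norm_num
        calc (-1:ℝ)^N * (1 * 1 * (-2:ℝ)^N * (A 0 N m * A (0-0) N m))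
            = ((-1:ℝ)^N * (-2:ℝ)^N) * (A 0 N m)^2 := by
              rw [show (0:ℕ)-0 = 0 from rfl]; ring
          _ = 2^N * (A 0 N m)^2 := by rw [h2]
      rw [hkey] at hlevel3
      have h2pos : (0:ℝ) < 2^N := by positivity
      have hsq : (A 0 (N-0) m)^2 = 0 :=
        (mul_eq_zero.1 hlevel3).resolve_left (ne_of_gt h2pos)
      exact sq_eq_zero_iff.1 hsq
    have hAα : A 0 (N-0) m = ∫ x : EuclideanSpace ℝ (Fin n), (∏ i, x i ^ α i) * f x := by
      simp only [hA, hP, Nat.sub_zero, Nat.mul_zero, pow_zero, one_mul]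
      refine integral_congr_ae (Filter.Eventually.of_forall fun x => ?_)
      show (∏ j, x (m j)) * f x = (∏ i, x i ^ α i) * f x
      rw [prod_fiber m (fun i => x i)]
      exact congrArg (· * f x) (Finset.prod_congr rfl fun i _ => by rw [hm i])
    rw [← hAα]
    exact hA0
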